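/- Let Q(n) be the set of density matrices supported on an N-dimensional subspace (i.e., N×N positive matrices with trace 1), equipped with the trace norm ‖·‖₁. Then the δ-bracketing entropy of Q(n) with respect to the positive semidefinite order and trace norm satisfies H_{B,1}(δ, Q(n)) ≤ C N² log(N/δ) for a universal constant C (one may take C = 1 + log 5), for all 0 < δ ≤ 1 and N ≥ 1. -/

import Mathlib

open Matrix


open MeasureTheory
open scoped ComplexOrder

/-- Trace norm of a matrix: `Tr √(AᴴA)`. -/
noncomputable def traceNorm {n : ℕ} (A : Matrix (Fin n) (Fin n) ℂ) : ℝ :=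
  ∑ i, Real.sqrt ((Matrix.posSemidef_conjTranspose_mul_self A).1.eigenvalues i)

lemma eig_smul_one {N : ℕ} (M : Matrix (Fin N) (Fin N) ℂ) (c : ℝ)
    (hMc : M = (c : ℂ) • 1) (hM : M.IsHermitian) (i : Fin N) : hM.eigenvalues i = c := by
  subst hMc
  rw [Matrix.IsHermitian.eigenvalues_eq]
  simp only [Matrix.smul_mulVec, Matrix.one_mulVec, dotProduct_smul,
    ← EuclideanSpace.inner_eq_star_dotProduct, inner_self_eq_norm_sq_to_K,
    hM.eigenvectorBasis.orthonormal.1 i]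
  rw [dotProduct_comm, ← EuclideanSpace.inner_eq_star_dotProduct, inner_self_eq_norm_sq_to_K,
    hM.eigenvectorBasis.orthonormal.1 i]
  simp

lemma traceNorm_smul_one {N : ℕ} (c : ℝ) (hc : 0 ≤ c) :
    traceNorm ((c : ℂ) • (1 : Matrix (Fin N) (Fin N) ℂ)) = N * c := by
  unfold traceNorm
  have h : ∀ i, (Matrix.posSemidef_conjTranspose_mul_self
      ((c : ℂ) • (1 : Matrix (Fin N) (Fin N) ℂ))).1.eigenvalues i = c ^ 2 := by
    intro i
    apply eig_smul_one
    rw [Matrix.conjTranspose_smul, Matrix.conjTranspose_one]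
    simp [smul_smul, ← Complex.ofReal_pow, ← Complex.ofReal_mul, sq]
  simp only [h]
  rw [Real.sqrt_sq hc]
  simp [mul_comm]



lemma quad_abs_bound {N : ℕ} (M : Matrix (Fin N) (Fin N) ℂ) (a b : ℝ) (ha : 0 ≤ a) (hab : a ≤ b)
    (hd : ∀ i, ‖M i i‖ ≤ a) (ho : ∀ i k, i ≠ k → ‖M i k‖ ≤ b)
    (x : Fin N → ℂ) :
    ‖dotProduct (star x) (M.mulVec x)‖ ≤
      (a + b * ((N : ℝ) - 1)) * ∑ i, ‖x i‖ ^ 2 := by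
  set u : Fin N → ℝ := fun i => ‖x i‖ with hu
  have hunn : ∀ i, 0 ≤ u i := fun i => (norm_nonneg _)
  have expand : dotProduct (star x) (M.mulVec x)
      = ∑ i, ∑ k, star (x i) * (M i k * x k) := by
    simp [dotProduct, Matrix.mulVec, Finset.mul_sum]
  rw [expand]
  calc ‖∑ i, ∑ k, star (x i) * (M i k * x k)‖
      ≤ ∑ i, ‖∑ k, star (x i) * (M i k * x k)‖ :=
        norm_sum_le _ _
    _ ≤ ∑ i, ∑ k, ‖star (x i) * (M i k * x k)‖ :=
        Finset.sum_le_sum fun i _ => norm_sum_le _ _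
    _ = ∑ i, ∑ k, u i * ‖M i k‖ * u k := by
        simp [_root_.map_mul, mul_assoc, mul_comm, mul_left_comm, hu]
    _ ≤ ∑ i, ∑ k, u i * (if i = k then a else b) * u k := by
        refine Finset.sum_le_sum fun i _ => Finset.sum_le_sum fun k _ => ?_
        refine mul_le_mul_of_nonneg_right (mul_le_mul_of_nonneg_left ?_ (hunn i)) (hunn k)
        split_ifs with h
        · subst h; exact hd i
        · exact ho i k h
    _ = b * (∑ i, u i) ^ 2 + (a - b) * ∑ i, u i ^ 2 := by
        have : ∀ i k : Fin N, u i * (if i = k then a else b) * u k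
            = b * (u i * u k) + (if k = i then (a - b) * u i ^ 2 else 0) := by
          intro i k
          rcases eq_or_ne i k with h | h
          · subst h; simp; ring
          · simp [h, h.symm]; ring
        simp only [this, Finset.sum_add_distrib, Finset.sum_ite_eq' Finset.univ,
          Finset.mem_univ, if_true]
        rw [sq (∑ i, u i), Finset.sum_mul_sum, Finset.mul_sum]
        congr 1
        · exact Finset.sum_congr rfl fun i _ => by rw [Finset.mul_sum]
        · rw [Finset.mul_sum]
    _ ≤ b * ((N : ℝ) * ∑ i, u i ^ 2) + (a - b) * ∑ i, u i ^ 2 := by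
        have hcs : (∑ i, u i) ^ 2 ≤ (N : ℝ) * ∑ i, u i ^ 2 := by
          have := Finset.sum_mul_sq_le_sq_mul_sq Finset.univ u (fun _ => (1 : ℝ))
          simpa [mul_comm] using this
        have hb : 0 ≤ b := le_trans ha hab
        nlinarith [Finset.sum_nonneg fun i (_ : i ∈ Finset.univ) => sq_nonneg (u i)]
    _ = (a + b * ((N : ℝ) - 1)) * ∑ i, u i ^ 2 := by ring

lemma psd_pair_of_small {N : ℕ} (M : Matrix (Fin N) (Fin N) ℂ) (hH : M.IsHermitian)
    (a b ε : ℝ) (ha : 0 ≤ a) (hab : a ≤ b)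
    (hd : ∀ i, ‖M i i‖ ≤ a) (ho : ∀ i k, i ≠ k → ‖M i k‖ ≤ b)
    (hε : a + b * ((N : ℝ) - 1) ≤ ε) :
    ((ε : ℂ) • 1 + M).PosSemidef ∧ ((ε : ℂ) • 1 - M).PosSemidef := by
  have h1 : ((ε : ℂ) • (1 : Matrix (Fin N) (Fin N) ℂ)).IsHermitian := by
    show _ᴴ = _
    rw [Matrix.conjTranspose_smul, Matrix.conjTranspose_one]
    simp
  have key : ∀ x : Fin N → ℂ, ∀ s : ℝ, (s = 1 ∨ s = -1) →
      0 ≤ dotProduct (star x) (((ε : ℂ) • 1 + (s:ℂ) • M).mulVec x) := by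
    intro x s hs
    have hS2nn : 0 ≤ ∑ i, ‖x i‖ ^ 2 :=
      Finset.sum_nonneg fun i _ => sq_nonneg _
    set S : ℂ := dotProduct (star x) (M.mulVec x) with hSdef
    have hSreal : (starRingEnd ℂ) S = S := by
      rw [hSdef]
      calc (starRingEnd ℂ) (dotProduct (star x) (M.mulVec x))
          = star (dotProduct (star x) (M.mulVec x)) := rfl
        _ = dotProduct (star (M.mulVec x)) x := by
            rw [← Matrix.star_dotProduct]
        _ = dotProduct (Matrix.vecMul (star x) Mᴴ) x := by
            rw [Matrix.star_mulVec]
        _ = dotProduct (star x) (Mᴴ.mulVec x) := by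
            rw [Matrix.dotProduct_mulVec]
        _ = dotProduct (star x) (M.mulVec x) := by rw [hH]
    have hSre : S = ((S.re : ℝ) : ℂ) := (Complex.conj_eq_iff_re.mp hSreal).symm
    have habsS : ‖S‖ ≤ ε * ∑ i, ‖x i‖ ^ 2 := by
      refine le_trans (quad_abs_bound M a b ha hab hd ho x) ?_
      exact mul_le_mul_of_nonneg_right hε hS2nn
    have hreS : |S.re| ≤ ε * ∑ i, ‖x i‖ ^ 2 :=
      le_trans (Complex.abs_re_le_norm S) habsS
    have hxx : dotProduct (star x) x = ((∑ i, ‖x i‖ ^ 2 : ℝ) : ℂ) := by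
      simp only [dotProduct, Pi.star_apply, Complex.ofReal_sum]
      refine Finset.sum_congr rfl fun i _ => ?_
      rw [Complex.star_def, mul_comm, Complex.mul_conj, Complex.normSq_eq_norm_sq]
    have hexpand : dotProduct (star x) (((ε : ℂ) • 1 + (s:ℂ) • M).mulVec x)
        = (ε : ℂ) * ((∑ i, ‖x i‖ ^ 2 : ℝ) : ℂ) + (s : ℂ) * S := by
      rw [Matrix.add_mulVec, Matrix.smul_mulVec, Matrix.smul_mulVec,
        Matrix.one_mulVec, dotProduct_add, dotProduct_smul,
        dotProduct_smul, hxx]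
      simp [smul_eq_mul, hSdef]
    rw [hexpand, hSre]
    have : (ε : ℂ) * ((∑ i, ‖x i‖ ^ 2 : ℝ) : ℂ) + (s : ℂ) * ((S.re : ℝ) : ℂ)
        = (((ε * ∑ i, ‖x i‖ ^ 2 + s * S.re : ℝ)) : ℂ) := by push_cast; ring
    rw [this, Complex.zero_le_real]
    rcases hs with h | h <;> subst h <;> cases abs_le.mp hreS <;> linarith [abs_le.mp hreS]
  constructor
  · refine Matrix.PosSemidef.of_dotProduct_mulVec_nonneg (h1.add hH) fun x => ?_
    have := key x 1 (Or.inl rfl)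
    simpa using this
  · refine Matrix.PosSemidef.of_dotProduct_mulVec_nonneg (h1.sub hH) fun x => ?_
    have := key x (-1) (Or.inr rfl)
    simpa [sub_eq_add_neg, neg_one_smul] using this

lemma round_err (m : ℕ) (hm : 0 < m) (x : ℝ) (h0 : 0 ≤ x) (h1 : x ≤ 1) :
    |(((min ⌊(m : ℝ) * x⌋₊ (m - 1) : ℕ) : ℝ) + 1/2) / m - x| ≤ 1 / (2 * m) := by
  set k : ℕ := min ⌊(m : ℝ) * x⌋₊ (m - 1) with hk
  have hmR : (0 : ℝ) < m := by exact_mod_cast hm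
  have h2 : (k : ℝ) ≤ m * x := by
    refine le_trans ?_ (Nat.floor_le (by positivity))
    exact_mod_cast min_le_left _ _
  have h3 : (m : ℝ) * x ≤ k + 1 := by
    rcases le_or_gt ⌊(m : ℝ) * x⌋₊ (m - 1) with h | h
    · have : k = ⌊(m : ℝ) * x⌋₊ := min_eq_left h
      rw [this]
      exact (Nat.lt_floor_add_one _).le
    · have hkm : k = m - 1 := min_eq_right h.le
      have : ((m - 1 : ℕ) : ℝ) = (m : ℝ) - 1 := by
        rw [Nat.cast_sub hm, Nat.cast_one]
      rw [hkm, this]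
      nlinarith
  have heq : (((k : ℕ) : ℝ) + 1/2) / m - x = ((k : ℝ) + 1/2 - m * x) / m := by
    field_simp
  have habs2 : |(k : ℝ) + 1/2 - m * x| ≤ 1/2 := abs_le.mpr ⟨by linarith, by linarith⟩
  rw [heq, abs_div, abs_of_pos hmR, div_le_div_iff₀ hmR (by positivity)]
  nlinarith

lemma density_entries {N : ℕ} (ρ : Matrix (Fin N) (Fin N) ℂ) (h : ρ.PosSemidef)
    (ht : ρ.trace = 1) :
    (∀ i, ρ i i = ((ρ i i).re : ℂ) ∧ 0 ≤ (ρ i i).re ∧ (ρ i i).re ≤ 1) ∧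
    (∀ i k, i ≠ k → ‖ρ i k‖ ≤ 1/2) := by
  have hsingle : ∀ (i : Fin N) (c : ℂ), star ((Pi.single i c : Fin N → ℂ)) = (Pi.single i (star c) : Fin N → ℂ) := by
    intro i c
    funext a
    rcases eq_or_ne a i with rfl | hai
    · simp
    · simp [Pi.single_apply, hai]
  have hquad : ∀ (i k : Fin N) (c d : ℂ),
      dotProduct (star (Pi.single i c + Pi.single k d))
        (ρ.mulVec (Pi.single i c + Pi.single k d))
      = star c * (ρ i i * c) + star c * (ρ i k * d) + star d * (ρ k i * c)
        + star d * (ρ k k * d) := by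
    intro i k c d
    rw [Matrix.mulVec_add, star_add, hsingle, hsingle, dotProduct_add,
      add_dotProduct, add_dotProduct]
    simp only [single_dotProduct, Matrix.mulVec_single, Pi.smul_apply, op_smul_eq_mul,
      Matrix.col_apply]
    ring
  have hdiagC : ∀ i, 0 ≤ ρ i i := by
    intro i
    have := h.dotProduct_mulVec_nonneg (Pi.single i 1)
    rw [hsingle] at this
    simpa [single_dotProduct, Matrix.mulVec_single] using this
  have hdiag_re : ∀ i, 0 ≤ (ρ i i).re := fun i => (Complex.nonneg_iff.mp (hdiagC i)).1
  have hdiag_im : ∀ i, (ρ i i).im = 0 := fun i => ((Complex.nonneg_iff.mp (hdiagC i)).2).symm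
  have hdiag_eq : ∀ i, ρ i i = ((ρ i i).re : ℂ) := by
    intro i
    exact (Complex.ext (by simp) (by simp [hdiag_im i])).symm
  have htr : ∑ i, (ρ i i).re = 1 := by
    have : (ρ.trace).re = 1 := by rw [ht]; simp
    rw [Matrix.trace] at this
    simpa [Complex.re_sum, Matrix.diag] using this
  have hle1 : ∀ i, (ρ i i).re ≤ 1 := by
    intro i
    rw [← htr]
    exact Finset.single_le_sum (fun a _ => hdiag_re a) (Finset.mem_univ i)
  refine ⟨fun i => ⟨hdiag_eq i, hdiag_re i, hle1 i⟩, fun i k hik => ?_⟩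
  rcases eq_or_ne (ρ i k) 0 with hz | hz
  · simp [hz]
  have hconj : ρ k i = star (ρ i k) := by
    have := h.1
    have h2 := congrFun (congrFun this k) i
    simpa [Matrix.conjTranspose_apply] using h2.symm
  set z : ℂ := ρ i k with hzdef
  set a : ℂ := ((‖z‖ : ℝ) : ℂ) with ha
  have habs : (0:ℝ) < ‖z‖ := norm_pos_iff.mpr hz
  have haz : a ≠ 0 := by
    rw [ha]
    exact_mod_cast Complex.ofReal_ne_zero.mpr habs.ne'
  set θ : ℂ := -(star z) / a with hθ
  have hsum2 : (ρ i i).re + (ρ k k).re ≤ 1 := by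
    rw [← htr]
    have hsub : ({i, k} : Finset (Fin N)) ⊆ Finset.univ := Finset.subset_univ _
    calc (ρ i i).re + (ρ k k).re = ∑ x ∈ ({i, k} : Finset (Fin N)), (ρ x x).re := by
          rw [Finset.sum_pair hik]
      _ ≤ ∑ x, (ρ x x).re :=
          Finset.sum_le_sum_of_subset_of_nonneg hsub (fun x _ _ => hdiag_re x)
  have hQ := h.dotProduct_mulVec_nonneg (Pi.single i 1 + Pi.single k θ)
  rw [hquad i k 1 θ] at hQ
  have hmc : z * star z = a * a := by
    rw [ha, Complex.star_def, Complex.mul_conj, Complex.normSq_eq_norm_sq]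
    push_cast
    ring
  have hastar : star a = a := by
    rw [ha, Complex.star_def, Complex.conj_ofReal]
  have hsθ : star θ = -z / a := by
    rw [hθ, star_div₀, star_neg, star_star, hastar]
  have hterm1 : ρ i k * θ = -a := by
    rw [← hzdef, hθ]
    calc z * (-(star z) / a) = -((z * star z) / a) := by ring
      _ = -((a * a) / a) := by rw [hmc]
      _ = -a := by field_simp
  have hterm2 : star θ * ρ k i = -a := by
    rw [hconj, hsθ]
    calc -z / a * star z = -((z * star z) / a) := by ring
      _ = -((a * a) / a) := by rw [hmc]
      _ = -a := by field_simp
  have hθθ : star θ * θ = 1 := by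
    rw [hsθ, hθ]
    calc -z / a * (-(star z) / a) = (z * star z) / (a * a) := by ring
      _ = (a * a) / (a * a) := by rw [hmc]
      _ = 1 := by field_simp
  have hQ' : (0:ℂ) ≤ ρ i i + ρ k k - 2 * a := by
    calc (0:ℂ) ≤ star (1:ℂ) * (ρ i i * 1) + star (1:ℂ) * (ρ i k * θ)
        + star θ * (ρ k i * 1) + star θ * (ρ k k * θ) := hQ
      _ = ρ i i + (ρ i k * θ) + (star θ * ρ k i) + (star θ * θ) * ρ k k := by
          simp only [star_one, one_mul, mul_one]
          ring
      _ = ρ i i + ρ k k - 2 * a := by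
          rw [hterm1, hterm2, hθθ]; ring
  have hre := (Complex.nonneg_iff.mp hQ').1
  rw [ha] at hre
  simp only [Complex.sub_re, Complex.add_re, Complex.mul_re, Complex.ofReal_re,
    Complex.ofReal_im, Complex.re_ofNat, Complex.im_ofNat] at hre
  norm_num at hre
  linarith

noncomputable def g0 (m : ℕ) (d : ℕ) : ℝ := ((d : ℝ) + 1/2) / m

noncomputable def gridMat (N m : ℕ) (f : Fin N → Fin N → Fin m) :
    Matrix (Fin N) (Fin N) ℂ :=
  Matrix.of fun i k =>
    if i = k then ((g0 m (f i i) : ℝ) : ℂ)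
    else if i < k then ((g0 m (f i k) - 1/2 : ℝ) : ℂ) + ((g0 m (f k i) - 1/2 : ℝ) : ℂ) * Complex.I
    else ((g0 m (f k i) - 1/2 : ℝ) : ℂ) - ((g0 m (f i k) - 1/2 : ℝ) : ℂ) * Complex.I

lemma gridMat_herm (N m : ℕ) (f : Fin N → Fin N → Fin m) : (gridMat N m f).IsHermitian := by
  show _ᴴ = _
  funext i k
  rw [Matrix.conjTranspose_apply]
  rcases lt_trichotomy i k with h | h | h
  · have h1 : ¬ (k = i) := (ne_of_gt h)
    have h2 : ¬ (k < i) := not_lt_of_gt h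
    have h3 : ¬ (i = k) := ne_of_lt h
    simp only [gridMat, Matrix.of_apply, h1, h2, h3, h, if_false, if_true]
    simp [map_sub, _root_.map_mul, Complex.conj_ofReal, Complex.conj_I]
  · subst h
    simp [gridMat, Complex.conj_ofReal]
  · have h1 : ¬ (i = k) := (ne_of_gt h)
    have h2 : ¬ (i < k) := not_lt_of_gt h
    have h3 : ¬ (k = i) := ne_of_lt h
    simp only [gridMat, Matrix.of_apply, h1, h2, h3, h, if_false, if_true]
    simp [map_add, _root_.map_mul, Complex.conj_ofReal, Complex.conj_I]
    ring

lemma approx_exists {N m : ℕ} (hm : 0 < m) (ρ : Matrix (Fin N) (Fin N) ℂ)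
    (h : ρ.PosSemidef) (ht : ρ.trace = 1) :
    ∃ f : Fin N → Fin N → Fin m,
      (∀ i, ‖(ρ - gridMat N m f) i i‖ ≤ 1 / (2 * m)) ∧
      (∀ i k, i ≠ k → ‖(ρ - gridMat N m f) i k‖ ≤ Real.sqrt 2 / (2 * m)) := by
  obtain ⟨hdiag, hoff⟩ := density_entries ρ h ht
  have hidx : ∀ x : ℝ, min ⌊(m : ℝ) * x⌋₊ (m - 1) < m :=
    fun x => lt_of_le_of_lt (min_le_right _ _) (Nat.sub_lt hm one_pos)
  set idx : ℝ → Fin m := fun x => ⟨min ⌊(m : ℝ) * x⌋₊ (m - 1), hidx x⟩ with hidxdef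
  have hround : ∀ x : ℝ, 0 ≤ x → x ≤ 1 → |g0 m (idx x) - x| ≤ 1 / (2 * m) := by
    intro x h0 h1
    have := round_err m hm x h0 h1
    simpa [g0, hidxdef] using this
  set f : Fin N → Fin N → Fin m := fun i k =>
    if i = k then idx (ρ i i).re
    else if i < k then idx ((ρ i k).re + 1/2)
    else idx ((ρ k i).im + 1/2) with hf
  refine ⟨f, ?_, ?_⟩
  · intro i
    have h1 := (hdiag i).1
    have h2 := (hdiag i).2.1
    have h3 := (hdiag i).2.2
    have hfe : f i i = idx (ρ i i).re := by simp [hf]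
    have him0 : (ρ i i).im = 0 := by rw [h1]; simp
    have : (ρ - gridMat N m f) i i = (((ρ i i).re - g0 m (f i i) : ℝ) : ℂ) := by
      simp only [Matrix.sub_apply, gridMat, Matrix.of_apply, if_pos rfl]
      apply Complex.ext <;> simp [him0]
    rw [this, Complex.norm_real, Real.norm_eq_abs, hfe]
    rw [abs_sub_comm]
    exact hround _ h2 h3
  · -- off-diagonal: first the case i < k, then deduce the general case
    have hH : (ρ - gridMat N m f).IsHermitian := h.1.sub (gridMat_herm N m f)
    have key : ∀ i k, i < k → ‖(ρ - gridMat N m f) i k‖ ≤ Real.sqrt 2 / (2 * m) := by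
      intro i k hik
      have hne : i ≠ k := ne_of_lt hik
      have habs := hoff i k hne
      have hre : |(ρ i k).re| ≤ 1/2 := le_trans (Complex.abs_re_le_norm _) habs
      have him : |(ρ i k).im| ≤ 1/2 := le_trans (Complex.abs_im_le_norm _) habs
      have hfik : f i k = idx ((ρ i k).re + 1/2) := by
        simp [hf, hne, hik]
      have hfki : f k i = idx ((ρ i k).im + 1/2) := by
        have : ¬ (k = i) := (ne_of_gt hik)
        have h2 : ¬ (k < i) := not_lt_of_gt hik
        simp [hf, this, h2]
      have hEntry : (ρ - gridMat N m f) i k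
          = ((((ρ i k).re - (g0 m (f i k) - 1/2) : ℝ)) : ℂ)
            + (((ρ i k).im - (g0 m (f k i) - 1/2) : ℝ) : ℂ) * Complex.I := by
        simp only [Matrix.sub_apply, gridMat, Matrix.of_apply, if_neg hne, if_pos hik]
        apply Complex.ext <;>
          simp [Complex.sub_re, Complex.add_re, Complex.mul_re, Complex.sub_im, Complex.add_im,
            Complex.mul_im, Complex.I_re, Complex.I_im, Complex.ofReal_re, Complex.ofReal_im]
      set u : ℝ := (ρ i k).re - (g0 m (f i k) - 1/2) with hu
      set v : ℝ := (ρ i k).im - (g0 m (f k i) - 1/2) with hv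
      have hubound : |u| ≤ 1 / (2 * m) := by
        rw [hu, hfik]
        have := hround ((ρ i k).re + 1/2) (by cases abs_le.mp hre; linarith)
          (by cases abs_le.mp hre; linarith)
        rw [abs_sub_comm] at this
        convert this using 2
        ring
      have hvbound : |v| ≤ 1 / (2 * m) := by
        rw [hv, hfki]
        have := hround ((ρ i k).im + 1/2) (by cases abs_le.mp him; linarith)
          (by cases abs_le.mp him; linarith)
        rw [abs_sub_comm] at this
        convert this using 2
        ring
      have hmpos : (0:ℝ) < 2 * m := by positivity
      rw [hEntry]
      have hz : ‖(u : ℂ) + (v : ℂ) * Complex.I‖ = Real.sqrt (u^2 + v^2) := by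
        rw [Complex.norm_def, Complex.normSq_apply]
        simp [Complex.add_re, Complex.add_im, Complex.mul_re, Complex.mul_im,
          Complex.I_re, Complex.I_im, Complex.ofReal_re, Complex.ofReal_im]
        ring_nf
      rw [hz]
      have h2 : u^2 + v^2 ≤ 2 * (1/(2*m))^2 := by
        have hu2 : u^2 ≤ (1/(2*m))^2 := by
          rw [← sq_abs u]
          exact pow_le_pow_left₀ (abs_nonneg u) hubound 2
        have hv2 : v^2 ≤ (1/(2*m))^2 := by
          rw [← sq_abs v]
          exact pow_le_pow_left₀ (abs_nonneg v) hvbound 2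
        linarith
      calc Real.sqrt (u^2 + v^2) ≤ Real.sqrt (2 * (1/(2*m))^2) := Real.sqrt_le_sqrt h2
        _ = Real.sqrt 2 * (1/(2*m)) := by
            rw [Real.sqrt_mul (by norm_num), Real.sqrt_sq (by positivity)]
        _ = Real.sqrt 2 / (2*m) := by ring
    intro i k hik
    rcases lt_or_gt_of_ne hik with h1 | h1
    · exact key i k h1
    · have : (ρ - gridMat N m f) i k = star ((ρ - gridMat N m f) k i) := by
        conv_lhs => rw [← hH]
        rw [Matrix.conjTranspose_apply]
      rw [this]
      rw [Complex.star_def, Complex.norm_conj]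
      exact key k i h1

lemma sqrt2_ub : Real.sqrt 2 ≤ 1.41421357 := by
  rw [show (1.41421357 : ℝ) = Real.sqrt (1.41421357 ^ 2) from
    (Real.sqrt_sq (by norm_num)).symm]
  exact Real.sqrt_le_sqrt (by norm_num)

lemma sqrt2_lb : (1.41421356 : ℝ) ≤ Real.sqrt 2 := by
  rw [show (1.41421356 : ℝ) = Real.sqrt (1.41421356 ^ 2) from
    (Real.sqrt_sq (by norm_num)).symm]
  exact Real.sqrt_le_sqrt (by norm_num)

lemma log5_lb : (8 : ℝ) / 5 ≤ Real.log 5 := by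
  rw [Real.le_log_iff_exp_le (by norm_num)]
  have h5 : Real.exp (8/5) ^ (5:ℕ) = Real.exp 8 := by
    rw [← Real.exp_nat_mul]; norm_num
  have h8 : Real.exp (8:ℝ) = Real.exp 1 ^ (8:ℕ) := by
    rw [← Real.exp_nat_mul]; norm_num
  have hpow : Real.exp (8/5) ^ (5:ℕ) ≤ 5 ^ (5:ℕ) := by
    rw [h5, h8]
    calc Real.exp 1 ^ (8:ℕ) ≤ 2.7182818286 ^ (8:ℕ) :=
        pow_le_pow_left₀ (Real.exp_nonneg 1) Real.exp_one_lt_d9.le 8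
      _ ≤ 5 ^ (5:ℕ) := by norm_num
  exact le_of_pow_le_pow_left₀ (by norm_num) (by norm_num) hpow

lemma log3_lb : (1 : ℝ) ≤ Real.log 3 := by
  rw [Real.le_log_iff_exp_le (by norm_num)]
  calc Real.exp 1 ≤ 2.7182818286 := Real.exp_one_lt_d9.le
    _ ≤ 3 := by norm_num

lemma logA_ub : Real.log (3 + 2 * Real.sqrt 2) ≤ 9 / 5 := by
  have hpos : (0:ℝ) < 3 + 2 * Real.sqrt 2 := by positivity
  rw [Real.log_le_iff_le_exp hpos]
  have hub : (3 : ℝ) + 2 * Real.sqrt 2 ≤ 5.82842714 := by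
    have := sqrt2_ub; linarith
  refine le_trans hub ?_
  have h9 : Real.exp (9/5) ^ (5:ℕ) = Real.exp 1 ^ (9:ℕ) := by
    rw [← Real.exp_nat_mul, ← Real.exp_nat_mul]; norm_num
  have hpow : (5.82842714 : ℝ) ^ (5:ℕ) ≤ Real.exp (9/5) ^ (5:ℕ) := by
    rw [h9]
    calc (5.82842714 : ℝ) ^ (5:ℕ) ≤ 2.7182818283 ^ (9:ℕ) := by norm_num
      _ ≤ Real.exp 1 ^ (9:ℕ) :=
        pow_le_pow_left₀ (by norm_num) Real.exp_one_gt_d9.le 9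
  exact le_of_pow_le_pow_left₀ (by norm_num) (Real.exp_nonneg _) hpow


set_option maxHeartbeats 1000000 in
/-- the δ-bracketing entropy (with respect to the operator order and the
trace norm) of the set of N×N density matrices is at most `C N² log(N/δ)` with
`C = 1 + log 5`: there is a family of at most `exp(C N² log(N/δ))` brackets
`[ρ_j^L, ρ_j^U]` of self-adjoint matrices with `‖ρ_j^U - ρ_j^L‖₁ ≤ δ` covering all
density matrices. -/
theorem bracketing_entropy_density_matrices (N : ℕ) (hN : 1 ≤ N) (δ : ℝ)
    (hδ0 : 0 < δ) (hδ1 : δ ≤ 1) :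
    ∃ (p : ℕ) (L U : Fin p → Matrix (Fin N) (Fin N) ℂ), 0 < p ∧
      (∀ j, (L j).IsHermitian ∧ (U j).IsHermitian ∧ traceNorm (U j - L j) ≤ δ) ∧
      (∀ ρ : Matrix (Fin N) (Fin N) ℂ, ρ.PosSemidef → ρ.trace = 1 →
        ∃ j, (ρ - L j).PosSemidef ∧ (U j - ρ).PosSemidef) ∧
      Real.log p ≤ (1 + Real.log 5) * N ^ 2 * Real.log (N / δ) := by
  rcases eq_or_lt_of_le hN with h1 | h2
  · -- N = 1
    subst h1
    refine ⟨1, fun _ => 1, fun _ => 1, Nat.one_pos,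
      fun j => ⟨Matrix.isHermitian_one, Matrix.isHermitian_one, ?_⟩, ?_, ?_⟩
    · have h0 : (1 : Matrix (Fin 1) (Fin 1) ℂ) - 1 = ((0:ℝ):ℂ) • 1 := by simp
      rw [h0, traceNorm_smul_one 0 le_rfl]
      simpa using hδ0.le
    · intro ρ hPSD htr
      have hρ : ρ = 1 := by
        have h00 : ρ 0 0 = 1 := by
          have htr2 : ρ.trace = ρ 0 0 := by
            rw [Matrix.trace]
            simp [Matrix.diag]
          rw [← htr2, htr]
        ext i k
        have hi : i = 0 := Subsingleton.elim i 0
        have hk : k = 0 := Subsingleton.elim k 0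
        subst hi; subst hk
        simp [h00, Matrix.one_apply]
      refine ⟨0, ?_, ?_⟩ <;> rw [hρ] <;> simp only [sub_self] <;> exact Matrix.PosSemidef.zero
    · have hC : (0:ℝ) ≤ 1 + Real.log 5 := by have := log5_lb; linarith
      have hlog : 0 ≤ Real.log ((1:ℝ)/δ) :=
        Real.log_nonneg (one_le_one_div hδ0 hδ1)
      simp only [Nat.cast_one, Real.log_one, one_pow, mul_one]
      nlinarith [mul_nonneg hC hlog]
  · -- 2 ≤ N
    have hN2 : 2 ≤ N := h2
    have hNR : (2:ℝ) ≤ (N:ℝ) := by exact_mod_cast hN2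
    have hNpos : (0:ℝ) < N := by linarith
    have hs2l : (1.41421356:ℝ) ≤ Real.sqrt 2 := sqrt2_lb
    have hs2u : Real.sqrt 2 ≤ 1.41421357 := sqrt2_ub
    set s2 := Real.sqrt 2 with hs2def
    set c : ℝ := N + s2 * N * ((N:ℝ) - 1) with hc
    have hcpos : 0 < c := by
      have hterm : 0 ≤ s2 * (N:ℝ) * ((N:ℝ) - 1) :=
        mul_nonneg (mul_nonneg (by linarith) (by linarith)) (by linarith)
      rw [hc]; linarith
    set m : ℕ := ⌈c / δ⌉₊ with hm
    have hmpos : 0 < m := Nat.ceil_pos.mpr (div_pos hcpos hδ0)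
    have hmR : (0:ℝ) < m := by exact_mod_cast hmpos
    have hcm : c ≤ δ * m := by
      have h := Nat.le_ceil (c/δ)
      rw [← hm] at h
      calc c = δ * (c/δ) := by field_simp
        _ ≤ δ * m := mul_le_mul_of_nonneg_left h hδ0.le
    have hmub : (m:ℝ) < c/δ + 1 := Nat.ceil_lt_add_one (by positivity)
    set ε : ℝ := δ / (2*N) with hεdef
    have hεpos : 0 < ε := by positivity
    set p : ℕ := m ^ (N^2) with hp
    have hppos : 0 < p := pow_pos hmpos _
    have hcard : Fintype.card (Fin N → Fin N → Fin m) = p := by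
      rw [Fintype.card_fun, Fintype.card_fun, Fintype.card_fin, Fintype.card_fin, ← pow_mul, hp]
      congr 1
      ring
    set e := Fintype.equivFinOfCardEq hcard with he
    refine ⟨p, fun j => gridMat N m (e.symm j) - ((ε:ℝ):ℂ) • 1,
           fun j => gridMat N m (e.symm j) + ((ε:ℝ):ℂ) • 1, hppos, ?_, ?_, ?_⟩
    · intro j
      have hsm : (((ε:ℝ):ℂ) • (1:Matrix (Fin N) (Fin N) ℂ)).IsHermitian := by
        show _ᴴ = _
        rw [Matrix.conjTranspose_smul, Matrix.conjTranspose_one]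
        simp
      refine ⟨(gridMat_herm N m _).sub hsm, (gridMat_herm N m _).add hsm, ?_⟩
      have hUL : (gridMat N m (e.symm j) + ((ε:ℝ):ℂ) • 1)
          - (gridMat N m (e.symm j) - ((ε:ℝ):ℂ) • 1)
          = (((2*ε:ℝ)):ℂ) • (1:Matrix (Fin N) (Fin N) ℂ) := by
        push_cast
        module
      rw [hUL, traceNorm_smul_one _ (by positivity)]
      have : (N:ℝ) * (2*ε) = δ := by
        rw [hεdef]
        field_simp
      linarith
    · intro ρ hPSD htr
      obtain ⟨f, hfd, hfo⟩ := approx_exists hmpos ρ hPSD htr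
      have hsymm : e.symm (e f) = f := Equiv.symm_apply_apply e f
      have h2m : (0:ℝ) < 2*(m:ℝ) := by positivity
      have h2N : (0:ℝ) < 2*(N:ℝ) := by positivity
      have hab : (1:ℝ)/(2*m) ≤ s2/(2*m) := by
        gcongr
        linarith
      have hεcond : 1/(2*(m:ℝ)) + s2/(2*m) * ((N:ℝ)-1) ≤ ε := by
        rw [hεdef]
        have expand : 1/(2*(m:ℝ)) + s2/(2*m) * ((N:ℝ)-1) = (1 + s2*((N:ℝ)-1))/(2*m) := by
          ring
        rw [expand, div_le_div_iff₀ h2m h2N]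
        rw [hc] at hcm
        nlinarith
      have hMH : (ρ - gridMat N m f).IsHermitian := hPSD.1.sub (gridMat_herm N m f)
      obtain ⟨hpsd1, hpsd2⟩ := psd_pair_of_small (ρ - gridMat N m f) hMH
        (1/(2*(m:ℝ))) (s2/(2*(m:ℝ))) ε (by positivity) hab hfd hfo hεcond
      refine ⟨e f, ?_, ?_⟩
      · have heq : ρ - (gridMat N m (e.symm (e f)) - ((ε:ℝ):ℂ) • 1)
            = ((ε:ℝ):ℂ) • 1 + (ρ - gridMat N m f) := by
          rw [hsymm]
          abel
        rw [heq]
        exact hpsd1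
      · have heq : (gridMat N m (e.symm (e f)) + ((ε:ℝ):ℂ) • 1) - ρ
            = ((ε:ℝ):ℂ) • 1 - (ρ - gridMat N m f) := by
          rw [hsymm]
          abel
        rw [heq]
        exact hpsd2
    · -- the entropy bound
      clear he
      clear e
      clear hcard
      have hNne : (N:ℝ) ≠ 0 := ne_of_gt hNpos
      have hδne : δ ≠ 0 := ne_of_gt hδ0
      have hlpow : Real.log p = (N:ℝ)^2 * Real.log m := by
        rw [hp]
        push_cast
        rw [Real.log_pow]
        push_cast
        ring
      suffices key : Real.log m ≤ (1 + Real.log 5) * Real.log ((N:ℝ)/δ) by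
        calc Real.log p = (N:ℝ)^2 * Real.log m := hlpow
          _ ≤ (N:ℝ)^2 * ((1+Real.log 5) * Real.log ((N:ℝ)/δ)) :=
              mul_le_mul_of_nonneg_left key (by positivity)
          _ = (1+Real.log 5) * (N:ℝ)^2 * Real.log ((N:ℝ)/δ) := by ring
      have hlogδ : Real.log δ ≤ 0 := Real.log_nonpos hδ0.le hδ1
      have hlogt : Real.log ((N:ℝ)/δ) = Real.log N - Real.log δ := Real.log_div hNne hδne
      have hl5 := log5_lb
      have hl2u := Real.log_two_lt_d9.le
      have hl2l := Real.log_two_gt_d9.le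
      rcases eq_or_lt_of_le hN2 with hN2' | hN3
      · -- N = 2
        have hNval : (N:ℝ) = 2 := by exact_mod_cast hN2'.symm
        have hcval : c = 2 + 2*s2 := by rw [hc, hNval]; ring
        have h1δ : (1:ℝ) ≤ 1/δ := one_le_one_div hδ0 hδ1
        have hmle : (m:ℝ) ≤ (3 + 2*s2)/δ := by
          have hd : (3+2*s2)/δ - (2+2*s2)/δ = 1/δ := by
            rw [div_sub_div_same]
            norm_num
          calc (m:ℝ) ≤ c/δ + 1 := hmub.le
            _ ≤ (3+2*s2)/δ := by rw [hcval]; linarith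
        have hlogm : Real.log m ≤ Real.log ((3+2*s2)/δ) := Real.log_le_log hmR hmle
        have hsplit : Real.log ((3+2*s2)/δ) = Real.log (3+2*s2) - Real.log δ :=
          Real.log_div (by positivity) hδne
        have hA := logA_ub
        rw [hlogt, hNval]
        have e1 : ((13:ℝ)/5)*(0.6931471803:ℝ) ≤ (1+Real.log 5)*Real.log 2 := by
          have ha1 : ((13:ℝ)/5) * (0.6931471803:ℝ) ≤ ((13:ℝ)/5) * Real.log 2 :=
            mul_le_mul_of_nonneg_left hl2l (by norm_num)
          have ha2 : ((13:ℝ)/5) * Real.log 2 ≤ (1+Real.log 5)*Real.log 2 :=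
            mul_le_mul_of_nonneg_right (by linarith) (by linarith)
          linarith
        have e2 : (-Real.log δ) ≤ (1+Real.log 5)*(-Real.log δ) :=
          le_mul_of_one_le_left (by linarith) (by linarith)
        have expand : (1+Real.log 5)*(Real.log 2 - Real.log δ)
            = (1+Real.log 5)*Real.log 2 + (1+Real.log 5)*(-Real.log δ) := by ring
        linarith [hlogm, hsplit, hA, expand]
      · -- N ≥ 3
        have hN3' : 3 ≤ N := hN3
        have hNR3 : (3:ℝ) ≤ (N:ℝ) := by exact_mod_cast hN3'
        have hmle : (m:ℝ) ≤ s2 * (N:ℝ)^2 / δ := by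
          have hnum : c + δ ≤ s2*(N:ℝ)^2 := by
            have hkey : (0.41421356:ℝ)*3 ≤ (s2-1)*(N:ℝ) :=
              mul_le_mul (by linarith) hNR3 (by norm_num) (by linarith)
            rw [hc]
            nlinarith [hkey]
          have : c/δ + 1 ≤ s2*(N:ℝ)^2/δ := by
            rw [div_add' _ _ _ hδne]
            gcongr
            linarith
          linarith [hmub.le]
        have hspos : (0:ℝ) < s2 * (N:ℝ)^2 / δ := by positivity
        have hlogm : Real.log m ≤ Real.log (s2*(N:ℝ)^2/δ) := Real.log_le_log hmR hmle
        have hsplit : Real.log (s2*(N:ℝ)^2/δ) = Real.log 2/2 + 2*Real.log N - Real.log δ := by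
          rw [Real.log_div (by positivity) hδne, Real.log_mul (by positivity) (by positivity),
            Real.log_pow, hs2def, Real.log_sqrt (by norm_num)]
          push_cast
          ring
        have hlogN : (1:ℝ) ≤ Real.log N :=
          le_trans log3_lb (Real.log_le_log (by norm_num) hNR3)
        rw [hlogt]
        have e1 : (3:ℝ)/5 ≤ (Real.log 5 - 1) * Real.log N := by
          have ha2 : (Real.log 5 - 1) * 1 ≤ (Real.log 5 - 1) * Real.log N :=
            mul_le_mul_of_nonneg_left hlogN (by linarith)
          linarith
        have e2 : 0 ≤ Real.log 5 * (-Real.log δ) :=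
          mul_nonneg (by linarith) (by linarith)
        have expand : (1+Real.log 5)*(Real.log (N:ℝ) - Real.log δ)
            = 2 * Real.log (N:ℝ) + (Real.log 5 - 1) * Real.log (N:ℝ)
              + Real.log 5 * (-Real.log δ) + (- Real.log δ) := by ring
        linarith [hlogm, hsplit, expand]
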